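/- Every minimal Cantor set in the Hilbert cube I^ω belongs to every non-trivial topologically invariant ideal with analytic base on I^ω; consequently, if I is a non-trivial topologically invariant σ-ideal with analytic base on I^ω, then σC₀ ⊆ I. -/

import Mathlib

open Set Topology Cardinal

/-- The Hilbert cube `[0,1]^ℕ` with the product topology. -/
abbrev HilbertCube : Type := ℕ → ↥(Set.Icc (0:ℝ) 1)

/-- An ideal of subsets: a nonempty family closed under subsets and finite unions. -/
def IsIdeal {X : Type*} (I : Set (Set X)) : Prop :=
  I.Nonempty ∧ (∀ A ∈ I, ∀ B, B ⊆ A → B ∈ I) ∧ (∀ A ∈ I, ∀ B ∈ I, A ∪ B ∈ I)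

/-- A σ-ideal: an ideal closed under countable unions. -/
def IsSigmaIdeal {X : Type*} (I : Set (Set X)) : Prop :=
  IsIdeal I ∧ ∀ A : ℕ → Set X, (∀ n, A n ∈ I) → (⋃ n, A n) ∈ I

/-- A non-trivial ideal contains an uncountable set but not the whole space. -/
def NontrivialIdeal {X : Type*} (I : Set (Set X)) : Prop :=
  (∃ A ∈ I, ¬ A.Countable) ∧ Set.univ ∉ I

/-- An ideal on a topological space is topologically invariant if it is preserved by
all homeomorphisms of the space. -/
def TopInvariant {X : Type*} [TopologicalSpace X] (I : Set (Set X)) : Prop :=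
  ∀ h : X ≃ₜ X, {B | ∃ A ∈ I, B = h '' A} = I

/-- `I` has a base all of whose members satisfy `P`. -/
def HasBaseWith {X : Type*} (I : Set (Set X)) (P : Set X → Prop) : Prop :=
  ∃ B ⊆ I, (∀ A ∈ I, ∃ C ∈ B, A ⊆ C) ∧ ∀ C ∈ B, P C

/-- A set has the Baire property if it differs from some open set by a meager set. -/
def HasBaireProperty {X : Type*} [TopologicalSpace X] (A : Set X) : Prop :=
  ∃ U : Set X, IsOpen U ∧ IsMeagre ((A \ U) ∪ (U \ A))

/-- The σ-ideal of meager subsets of a topological space. -/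
def MeagerIdeal (X : Type*) [TopologicalSpace X] : Set (Set X) := {A | IsMeagre A}

/-- The σ-ideal generated by a family `F`: all subsets of countable unions of members
of `F`. -/
def sigmaGenerated {X : Type*} (F : Set (Set X)) : Set (Set X) :=
  {A | ∃ S : ℕ → Set X, (∀ n, S n ∈ F) ∧ A ⊆ ⋃ n, S n}

/-- A Cantor set in the Hilbert cube: a subset homeomorphic to the Cantor cube. -/
def IsCantorSet (C : Set HilbertCube) : Prop := Nonempty (C ≃ₜ (ℕ → Bool))

/-- A minimal Cantor set: one that can be mapped into any other Cantor set by an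
ambient homeomorphism. -/
def IsMinimalCantorSet (A : Set HilbertCube) : Prop :=
  IsCantorSet A ∧ ∀ B : Set HilbertCube, IsCantorSet B →
    ∃ h : HilbertCube ≃ₜ HilbertCube, h '' A ⊆ B

/-- The family of all minimal Cantor sets in the Hilbert cube. -/
def CantorFamily : Set (Set HilbertCube) := {A | IsMinimalCantorSet A}

/-- The σ-ideal generated by minimal Cantor sets. -/
def sigmaC0 : Set (Set HilbertCube) := sigmaGenerated CantorFamily

/-- A minimal dense Gδ-subset of the Hilbert cube. -/
def IsMinimalDenseGdelta (A : Set HilbertCube) : Prop :=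
  IsGδ A ∧ Dense A ∧ ∀ B : Set HilbertCube, IsGδ B → Dense B →
    ∃ h : HilbertCube ≃ₜ HilbertCube, h '' A ⊆ B

/-- The family of all minimal dense Gδ-sets in the Hilbert cube. -/
def GdeltaFamily : Set (Set HilbertCube) := {A | IsMinimalDenseGdelta A}

/-- The σ-ideal generated by minimal dense Gδ-sets. -/
def sigmaG0 : Set (Set HilbertCube) := sigmaGenerated GdeltaFamily

/-- `cov(I)`: the least cardinality of a subfamily of `I` covering the space. -/
noncomputable def covIdeal {X : Type*} (I : Set (Set X)) : Cardinal :=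
  sInf {c | ∃ A : Set (Set X), A ⊆ I ∧ ⋃₀ A = Set.univ ∧ c = #A}

/-- `non(I)`: the least cardinality of a subset of the space not in `I`. -/
noncomputable def nonIdeal {X : Type*} (I : Set (Set X)) : Cardinal :=
  sInf {c | ∃ A : Set X, A ∉ I ∧ c = #A}

/-- `add(I,J)`: the least cardinality of a subfamily of `I` whose union is not in `J`. -/
noncomputable def addIdeal2 {X : Type*} (I J : Set (Set X)) : Cardinal :=
  sInf {c | ∃ A : Set (Set X), A ⊆ I ∧ ⋃₀ A ∉ J ∧ c = #A}

/-- `add(I) = add(I,I)`. -/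
noncomputable def addIdeal {X : Type*} (I : Set (Set X)) : Cardinal := addIdeal2 I I

/-- `cof(I,J)`: the least cardinality of a subfamily of `J` cofinal in `I`. -/
noncomputable def cofIdeal2 {X : Type*} (I J : Set (Set X)) : Cardinal :=
  sInf {c | ∃ A : Set (Set X), A ⊆ J ∧ (∀ B ∈ I, ∃ C ∈ A, B ⊆ C) ∧ c = #A}

/-- `cof(I) = cof(I,I)`. -/
noncomputable def cofIdeal {X : Type*} (I : Set (Set X)) : Cardinal := cofIdeal2 I I

/-- The compact-open topology on the homeomorphism group of a space, induced by the
compact-open topology of the space of continuous self-maps. -/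
noncomputable instance homeoGroupTopology (X : Type*) [TopologicalSpace X] :
    TopologicalSpace (X ≃ₜ X) :=
  TopologicalSpace.induced (fun h : X ≃ₜ X => (⟨h, h.continuous⟩ : C(X, X)))
    ContinuousMap.compactOpen

/-- A Z-set: a closed set `A` such that for every open cover `U` of the space there is a
continuous map into the complement of `A` which is `U`-near to the identity. -/
def IsZSet {X : Type*} [TopologicalSpace X] (A : Set X) : Prop :=
  IsClosed A ∧ ∀ U : Set (Set X), (∀ V ∈ U, IsOpen V) → ⋃₀ U = Set.univ →
    ∃ f : C(X, X), (∀ x, f x ∉ A) ∧ ∀ x : X, ∃ V ∈ U, x ∈ V ∧ f x ∈ V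

/-- A σZ-set: a countable union of Z-sets. -/
def IsSigmaZSet {X : Type*} [TopologicalSpace X] (A : Set X) : Prop :=
  ∃ Z : ℕ → Set X, (∀ n, IsZSet (Z n)) ∧ A = ⋃ n, Z n

/-- The cube `[0,1]^n`. -/
abbrev FinCube (n : ℕ) : Type := Fin n → ↥(Set.Icc (0:ℝ) 1)

/-- A `Z_n`-set in the Hilbert cube: a closed set `A` such that maps avoiding `A` are
dense in the space `C([0,1]^n, I^ω)` with the compact-open topology. -/
def IsZnSet (n : ℕ) (A : Set HilbertCube) : Prop :=
  IsClosed A ∧ Dense {f : C(FinCube n, HilbertCube) | ∀ x, f x ∉ A}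

/-- A `Z_ω`-set in the Hilbert cube: a closed set which is a `Z_n`-set for all `n`. -/
def IsZomegaSet (A : Set HilbertCube) : Prop :=
  IsClosed A ∧ ∀ n : ℕ, IsZnSet n A

/-- Covering dimension of a space is at most `n`: every finite open cover has a finite
open refinement (still a cover) in which no point belongs to more than `n+1` members. -/
def CovDimLE (Y : Type*) [TopologicalSpace Y] (n : ℕ) : Prop :=
  ∀ U : Set (Set Y), U.Finite → (∀ V ∈ U, IsOpen V) → ⋃₀ U = Set.univ →
    ∃ V : Set (Set Y), V.Finite ∧ (∀ W ∈ V, IsOpen W) ∧ ⋃₀ V = Set.univ ∧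
      (∀ W ∈ V, ∃ W' ∈ U, W ⊆ W') ∧
      ∀ y : Y, {W ∈ V | y ∈ W}.ncard ≤ n + 1

/-- A `G_δ`-generated topologically invariant ideal on the Hilbert cube. -/
def GdeltaGenerated (I : Set (Set HilbertCube)) : Prop :=
  HasBaseWith I IsSigmaCompact ∧
  ∃ G : Set HilbertCube, IsGδ G ∧
    (∀ K : Set HilbertCube, K ⊆ G → IsCompact K → K ∈ I) ∧
    ∀ A ∈ I, IsCompact A →
      Dense {h : HilbertCube ≃ₜ HilbertCube | h '' A ⊆ G}

/-- A `G_δ*`-generated ideal: a preimage of a `G_δ`-generated ideal under an embedding. -/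
def GdeltaStarGenerated (I : Set (Set HilbertCube)) : Prop :=
  ∃ I' : Set (Set HilbertCube), GdeltaGenerated I' ∧
    ∃ e : HilbertCube → HilbertCube, IsEmbedding e ∧ I = {S | ∃ A ∈ I', S = e ⁻¹' A}

/-- A `σG_δ*`-generated ideal. -/
def SigmaGdeltaStarGenerated (I : Set (Set HilbertCube)) : Prop :=
  ∃ In : ℕ → Set (Set HilbertCube), (∀ n, GdeltaStarGenerated (In n)) ∧
    (∀ n, In n ⊆ I) ∧
    ∀ A ∈ I, ∃ K : ℕ → Set HilbertCube,
      (∀ n, IsCompact (K n) ∧ K n ∈ In n) ∧ A ⊆ ⋃ n, K n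

section PSP

open Filter

namespace CantorPSP

variable {X : Type*} [MetricSpace X]

set_option maxHeartbeats 1000000 in
/-- Condensation pair. -/
lemma cond_pair (f : (ℕ → ℕ) → X) (V : Set (ℕ → ℕ))
    (hV : ¬(f '' V).Countable) :
    ∃ x₀ x₁, x₀ ∈ V ∧ x₁ ∈ V ∧ f x₀ ≠ f x₁ ∧
      (∀ U, IsOpen U → x₀ ∈ U → ¬(f '' (V ∩ U)).Countable) ∧
      (∀ U, IsOpen U → x₁ ∈ U → ¬(f '' (V ∩ U)).Countable) := by
  obtain ⟨b, hbc, -, hbasis⟩ := TopologicalSpace.exists_countable_basis (ℕ → ℕ)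
  set K := {x | x ∈ V ∧ ∀ U, IsOpen U → x ∈ U → ¬(f '' (V ∩ U)).Countable} with hK
  have hsmall : (f '' (V \ K)).Countable := by
    have hsub : f '' (V \ K) ⊆
        ⋃ U ∈ {U ∈ b | (f '' (V ∩ U)).Countable}, f '' (V ∩ U) := by
      rintro _ ⟨x, ⟨hxV, hxK⟩, rfl⟩
      have : ∃ U, IsOpen U ∧ x ∈ U ∧ (f '' (V ∩ U)).Countable := by
        by_contra hc
        push_neg at hc
        exact hxK ⟨hxV, fun U hUo hxU => (hc U hUo hxU)⟩
      obtain ⟨U, hUo, hxU, hUc⟩ := this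
      obtain ⟨U', hU'b, hxU', hU'U⟩ := hbasis.exists_subset_of_mem_open hxU hUo
      have hU'c : (f '' (V ∩ U')).Countable :=
        hUc.mono (image_mono (inter_subset_inter_right _ hU'U))
      exact mem_biUnion ⟨hU'b, hU'c⟩ ⟨x, ⟨hxV, hxU'⟩, rfl⟩
    refine Set.Countable.mono hsub ?_
    exact Set.Countable.biUnion (hbc.mono (sep_subset _ _)) (fun U hU => hU.2)
  have hKbig : ¬(f '' K).Countable := by
    intro hc
    apply hV
    have : f '' V ⊆ f '' K ∪ f '' (V \ K) := by
      rintro _ ⟨x, hx, rfl⟩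
      by_cases hxK : x ∈ K
      · exact Or.inl ⟨x, hxK, rfl⟩
      · exact Or.inr ⟨x, ⟨hx, hxK⟩, rfl⟩
    exact (hc.union hsmall).mono this
  have hpair : ∃ x₀ ∈ K, ∃ x₁ ∈ K, f x₀ ≠ f x₁ := by
    by_contra hc
    push_neg at hc
    apply hKbig
    rcases K.eq_empty_or_nonempty with hKe | ⟨x, hx⟩
    · simp [hKe]
    · have : f '' K ⊆ {f x} := by
        rintro _ ⟨y, hy, rfl⟩
        exact (hc y hy x hx)
      exact (countable_singleton _).mono this
  obtain ⟨x₀, hx₀, x₁, hx₁, hne⟩ := hpair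
  exact ⟨x₀, x₁, hx₀.1, hx₁.1, hne, hx₀.2, hx₁.2⟩

/-- A cylinder set is open. -/
lemma cyl_open (n : ℕ) (x : ℕ → ℕ) : IsOpen {y : ℕ → ℕ | ∀ j < n, y j = x j} := by
  have : {y : ℕ → ℕ | ∀ j < n, y j = x j}
      = ⋂ j ∈ Finset.range n, (fun y : ℕ → ℕ => y j) ⁻¹' {x j} := by
    ext y; simp [Finset.mem_range]
  rw [this]
  exact isOpen_biInter_finset fun j _ =>
    (continuous_apply j).isOpen_preimage _ (isOpen_discrete _)

/-- One splitting step of the Cantor scheme. -/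
lemma step_spec (f : (ℕ → ℕ) → X) (hf : Continuous f) (n : ℕ) (V : Set (ℕ → ℕ))
    (hVo : IsOpen V) (hV : ¬(f '' V).Countable) :
    ∃ p : Bool → Set (ℕ → ℕ) × (ℕ → ℕ),
      (∀ i, IsOpen (p i).1 ∧ ¬(f '' (p i).1).Countable ∧ (p i).2 ∈ (p i).1 ∧
        (p i).1 ⊆ V ∧ (∀ y ∈ (p i).1, ∀ j < n + 1, y j = (p i).2 j) ∧
        f '' (p i).1 ⊆ Metric.ball (f (p i).2) ((1/2) ^ n)) ∧
      Disjoint (closure (f '' (p false).1)) (closure (f '' (p true).1)) := by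
  obtain ⟨x₀, x₁, hx₀V, hx₁V, hne, hc₀, hc₁⟩ := cond_pair f V hV
  set d := dist (f x₀) (f x₁) with hd
  have hd0 : 0 < d := dist_pos.2 hne
  set r := min ((1/2 : ℝ) ^ n) (d / 3) with hrdef
  have hr0 : 0 < r := lt_min (by positivity) (by linarith)
  have hrn : r ≤ (1/2 : ℝ) ^ n := min_le_left _ _
  have hrd : r ≤ d / 3 := min_le_right _ _
  set W : (ℕ → ℕ) → Set (ℕ → ℕ) :=
    fun x => f ⁻¹' Metric.ball (f x) r ∩ {y | ∀ j < n + 1, y j = x j} with hW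
  have hWo : ∀ x, IsOpen (W x) :=
    fun x => (hf.isOpen_preimage _ Metric.isOpen_ball).inter (cyl_open (n+1) x)
  have hWx : ∀ x, x ∈ W x := fun x => ⟨Metric.mem_ball_self hr0, fun _ _ => rfl⟩
  refine ⟨fun i => if i then (V ∩ W x₁, x₁) else (V ∩ W x₀, x₀), ?_, ?_⟩
  · intro i
    cases i <;>
    · refine ⟨hVo.inter (hWo _), ?_, ⟨‹_›, hWx _⟩, inter_subset_left, ?_, ?_⟩
      · first
          | exact hc₀ _ (hWo _) (hWx _)
          | exact hc₁ _ (hWo _) (hWx _)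
      · exact fun y hy j hj => hy.2.2 j hj
      · rintro _ ⟨y, hy, rfl⟩
        exact Metric.ball_subset_ball hrn hy.2.1
  · have key : ∀ x : ℕ → ℕ, closure (f '' (V ∩ W x)) ⊆ Metric.closedBall (f x) r := by
      intro x
      refine closure_minimal ?_ Metric.isClosed_closedBall
      rintro _ ⟨y, hy, rfl⟩
      exact Metric.ball_subset_closedBall hy.2.1
    rw [Set.disjoint_left]
    intro z hz0 hz1
    have h0 : dist z (f x₀) ≤ r := key x₀ hz0
    have h1 : dist z (f x₁) ≤ r := key x₁ hz1
    have : d ≤ dist z (f x₀) + dist z (f x₁) := by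
      rw [hd]
      rw [dist_comm z (f x₀)] at h0 ⊢
      exact dist_triangle _ _ _
    linarith

variable (f : (ℕ → ℕ) → X) (hf : Continuous f)

open Classical in
/-- The step function, defined by choice. -/
noncomputable def step (n : ℕ) (V : Set (ℕ → ℕ)) : Bool → Set (ℕ → ℕ) × (ℕ → ℕ) :=
  if h : IsOpen V ∧ ¬(f '' V).Countable then (step_spec f hf n V h.1 h.2).choose
  else fun _ => (Set.univ, fun _ => 0)

/-- The Cantor scheme, indexed by lists (most recent choice at head). -/
noncomputable def D : List Bool → Set (ℕ → ℕ) × (ℕ → ℕ)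
  | [] => (Set.univ, fun _ => 0)
  | i :: σ => step f hf σ.length (D σ).1 i

lemma D_basic (hr : ¬(Set.range f).Countable) : ∀ σ : List Bool,
    IsOpen (D f hf σ).1 ∧ ¬(f '' (D f hf σ).1).Countable ∧ (D f hf σ).2 ∈ (D f hf σ).1 := by
  intro σ
  induction σ with
  | nil => exact ⟨isOpen_univ, by simp only [D, Set.image_univ]; exact hr, mem_univ _⟩
  | cons i σ ih =>
    obtain ⟨ho, hbig, -⟩ := ih
    have hstep : D f hf (i :: σ) = (step_spec f hf σ.length (D f hf σ).1 ho hbig).choose i := by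
      show step f hf σ.length (D f hf σ).1 i = _
      rw [step, dif_pos ⟨ho, hbig⟩]
    obtain ⟨h1, -⟩ := (step_spec f hf σ.length (D f hf σ).1 ho hbig).choose_spec
    obtain ⟨a, b, c, -, -, -⟩ := h1 i
    rw [hstep]
    exact ⟨a, b, c⟩

lemma D_succ (hr : ¬(Set.range f).Countable) (σ : List Bool) :
    (∀ i : Bool, (D f hf (i :: σ)).1 ⊆ (D f hf σ).1 ∧
      (∀ y ∈ (D f hf (i :: σ)).1, ∀ j < σ.length + 1, y j = (D f hf (i :: σ)).2 j) ∧
      f '' (D f hf (i :: σ)).1 ⊆ Metric.ball (f (D f hf (i :: σ)).2) ((1/2) ^ σ.length)) ∧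
    Disjoint (closure (f '' (D f hf (false :: σ)).1))
      (closure (f '' (D f hf (true :: σ)).1)) := by
  obtain ⟨ho, hbig, -⟩ := D_basic f hf hr σ
  have hstep : ∀ i : Bool,
      D f hf (i :: σ) = (step_spec f hf σ.length (D f hf σ).1 ho hbig).choose i := by
    intro i
    show step f hf σ.length (D f hf σ).1 i = _
    rw [step, dif_pos ⟨ho, hbig⟩]
  obtain ⟨h1, h2⟩ := (step_spec f hf σ.length (D f hf σ).1 ho hbig).choose_spec
  constructor
  · intro i
    obtain ⟨-, -, -, d, e, g⟩ := h1 i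
    rw [hstep i]
    exact ⟨d, e, g⟩
  · rw [hstep false, hstep true]
    exact h2

/-- The branch list of `b` up to level `n` (most recent at head). -/
def tau (b : ℕ → Bool) : ℕ → List Bool
  | 0 => []
  | n + 1 => b n :: tau b n

lemma tau_length (b : ℕ → Bool) (n : ℕ) : (tau b n).length = n := by
  induction n with
  | zero => rfl
  | succ n ih => simp [tau, ih]

lemma tau_congr {b b' : ℕ → Bool} {n : ℕ} (h : ∀ i < n, b i = b' i) :
    tau b n = tau b' n := by
  induction n with
  | zero => rfl
  | succ n ih =>
    simp only [tau]
    rw [h n (Nat.lt_succ_self n), ih (fun i hi => h i (Nat.lt_succ_of_lt hi))]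

lemma D_tau_mono (hr : ¬(Set.range f).Countable) (b : ℕ → Bool) : ∀ {n m : ℕ}, n ≤ m →
    (D f hf (tau b m)).1 ⊆ (D f hf (tau b n)).1 := by
  intro n m h
  induction m with
  | zero => rw [Nat.le_zero.1 h]
  | succ m ih =>
    rcases Nat.lt_or_ge n (m+1) with hlt | hge
    · exact ((D_succ f hf hr (tau b m)).1 (b m)).1.trans (ih (Nat.lt_succ_iff.1 hlt))
    · rw [Nat.le_antisymm h hge]

lemma D_tau_mem (hr : ¬(Set.range f).Countable) (b : ℕ → Bool) {n m : ℕ} (h : n ≤ m) :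
    (D f hf (tau b m)).2 ∈ (D f hf (tau b n)).1 :=
  D_tau_mono f hf hr b h (D_basic f hf hr (tau b m)).2.2

/-- The limit point of the branch `b`. -/
noncomputable def gpt (b : ℕ → Bool) : ℕ → ℕ := fun j => (D f hf (tau b (j+1))).2 j

lemma coord_eq (hr : ¬(Set.range f).Countable) (b : ℕ → Bool) {j m : ℕ} (h : j + 1 ≤ m) :
    (D f hf (tau b m)).2 j = gpt f hf b j := by
  have hmem : (D f hf (tau b m)).2 ∈ (D f hf (tau b (j+1))).1 := D_tau_mem f hf hr b h
  have hcyl := ((D_succ f hf hr (tau b j)).1 (b j)).2.1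
  rw [tau_length] at hcyl
  exact hcyl _ hmem j (Nat.lt_succ_self j)

lemma tendsto_gpt (hr : ¬(Set.range f).Countable) (b : ℕ → Bool) :
    Tendsto (fun m => (D f hf (tau b m)).2) atTop (𝓝 (gpt f hf b)) := by
  rw [tendsto_pi_nhds]
  intro j
  apply tendsto_const_nhds.congr'
  filter_upwards [eventually_ge_atTop (j+1)] with m hm
  exact (coord_eq f hf hr b hm).symm

lemma gpt_mem_closure (hr : ¬(Set.range f).Countable) (b : ℕ → Bool) (n : ℕ) :
    gpt f hf b ∈ closure (D f hf (tau b n)).1 :=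
  mem_closure_of_tendsto (tendsto_gpt f hf hr b)
    (by filter_upwards [eventually_ge_atTop n] with m hm using D_tau_mem f hf hr b hm)

lemma F_mem_closure (hr : ¬(Set.range f).Countable) (b : ℕ → Bool) (n : ℕ) :
    f (gpt f hf b) ∈ closure (f '' (D f hf (tau b n)).1) :=
  image_closure_subset_closure_image hf ⟨_, gpt_mem_closure f hf hr b n, rfl⟩

include hf in
/-- The perfect set property for continuous images of Baire space. -/
lemma exists_cantor_injection (hr : ¬(Set.range f).Countable) :
    ∃ F : (ℕ → Bool) → X, Continuous F ∧ Function.Injective F ∧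
      Set.range F ⊆ Set.range f := by
  refine ⟨fun b => f (gpt f hf b), ?_, ?_, ?_⟩
  · rw [continuous_iff_continuousAt]
    intro b
    rw [ContinuousAt, Metric.tendsto_nhds]
    intro ε hε
    have htend : Tendsto (fun n : ℕ => ((1/2 : ℝ)) ^ n) atTop (𝓝 0) :=
      tendsto_pow_atTop_nhds_zero_of_lt_one (by norm_num) (by norm_num)
    obtain ⟨n, hn⟩ := (htend.eventually (gt_mem_nhds (show (0:ℝ) < ε/2 by linarith))).exists
    have hS : {b' : ℕ → Bool | ∀ i < n + 1, b' i = b i} ∈ 𝓝 b := by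
      have : IsOpen {b' : ℕ → Bool | ∀ i < n + 1, b' i = b i} := by
        have : {b' : ℕ → Bool | ∀ i < n + 1, b' i = b i}
            = ⋂ i ∈ Finset.range (n+1), (fun b' : ℕ → Bool => b' i) ⁻¹' {b i} := by
          ext y; simp [Finset.mem_range]
        rw [this]
        exact isOpen_biInter_finset fun i _ =>
          (continuous_apply i).isOpen_preimage _ (isOpen_discrete _)
      exact this.mem_nhds (fun i _ => rfl)
    filter_upwards [hS] with b' hb'
    have htaueq : tau b' (n+1) = tau b (n+1) := tau_congr hb'
    have hball : closure (f '' (D f hf (tau b (n+1))).1) ⊆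
        Metric.closedBall (f (D f hf (tau b (n+1))).2) ((1/2) ^ n) := by
      have := ((D_succ f hf hr (tau b n)).1 (b n)).2.2
      rw [tau_length] at this
      calc closure (f '' (D f hf (tau b (n+1))).1)
          ⊆ closure (Metric.ball (f (D f hf (tau b (n+1))).2) ((1/2) ^ n)) :=
            closure_mono this
        _ ⊆ _ := Metric.closure_ball_subset_closedBall
    have hb'mem : f (gpt f hf b') ∈ Metric.closedBall (f (D f hf (tau b (n+1))).2) ((1/2)^n) := by
      apply hball
      rw [← htaueq]
      exact F_mem_closure f hf hr b' (n+1)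
    have hbmem : f (gpt f hf b) ∈ Metric.closedBall (f (D f hf (tau b (n+1))).2) ((1/2)^n) :=
      hball (F_mem_closure f hf hr b (n+1))
    rw [Metric.mem_closedBall] at hb'mem hbmem
    calc dist (f (gpt f hf b')) (f (gpt f hf b))
        ≤ dist (f (gpt f hf b')) (f (D f hf (tau b (n+1))).2)
          + dist (f (gpt f hf b)) (f (D f hf (tau b (n+1))).2) := dist_triangle_right _ _ _
      _ < ε := by linarith
  · intro b b' hbb'
    by_contra hne
    have hex : ∃ n, b n ≠ b' n := Function.ne_iff.1 hne
    set n := Nat.find hex with hn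
    have hagree : tau b n = tau b' n :=
      tau_congr fun i hi => not_not.1 (Nat.find_min hex hi)
    have hFb : f (gpt f hf b) ∈ closure (f '' (D f hf (b n :: tau b n)).1) :=
      F_mem_closure f hf hr b (n+1)
    have hFb' : f (gpt f hf b') ∈ closure (f '' (D f hf (b' n :: tau b n)).1) := by
      rw [hagree]
      exact F_mem_closure f hf hr b' (n+1)
    have hdisj := (D_succ f hf hr (tau b n)).2
    have hbn : b n ≠ b' n := Nat.find_spec hex
    have hbb2 : f (gpt f hf b) = f (gpt f hf b') := hbb'
    rw [← hbb2] at hFb'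
    cases hb1 : b n <;> cases hb2 : b' n
    · exact hbn (hb1.trans hb2.symm)
    · rw [hb1] at hFb; rw [hb2] at hFb'
      exact Set.disjoint_left.1 hdisj hFb hFb'
    · rw [hb1] at hFb; rw [hb2] at hFb'
      exact Set.disjoint_left.1 hdisj hFb' hFb
    · exact hbn (hb1.trans hb2.symm)
  · rintro _ ⟨b, rfl⟩
    exact ⟨_, rfl⟩

end CantorPSP

/-- Perfect set property for analytic sets in a metric space: an uncountable
analytic set contains a homeomorphic copy of the Cantor space. -/
lemma analytic_contains_cantor {X : Type*} [MetricSpace X] {s : Set X}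
    (hs : MeasureTheory.AnalyticSet s) (hunc : ¬s.Countable) :
    ∃ B ⊆ s, Nonempty (B ≃ₜ (ℕ → Bool)) := by
  rw [MeasureTheory.AnalyticSet_def] at hs
  rcases hs with rfl | ⟨f, hf, rfl⟩
  · exact absurd countable_empty hunc
  obtain ⟨F, hFc, hFi, hFr⟩ := CantorPSP.exists_cantor_injection f hf hunc
  refine ⟨Set.range F, hFr, ?_⟩
  exact ⟨(hFc.isClosedEmbedding hFi).toIsEmbedding.toHomeomorph.symm⟩

end PSP

/-- Every minimal Cantor set belongs to every non-trivial topologically invariant ideal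
with analytic base on the Hilbert cube; consequently for σ-ideals, `σC₀ ⊆ I`. -/
theorem minimal_cantor_sets_in_every_ideal (I : Set (Set HilbertCube))
    (hI : IsIdeal I) (hnt : NontrivialIdeal I) (hinv : TopInvariant I)
    (hb : HasBaseWith I MeasureTheory.AnalyticSet) :
    CantorFamily ⊆ I ∧ (IsSigmaIdeal I → sigmaC0 ⊆ I) := by
  have hmain : CantorFamily ⊆ I := by
    intro A hA
    obtain ⟨⟨A₁, hA₁I, hA₁unc⟩, -⟩ := hnt
    obtain ⟨Bs, hBsI, hcof, hP⟩ := hb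
    obtain ⟨C, hCBs, hA₁C⟩ := hcof A₁ hA₁I
    have hCI : C ∈ I := hBsI hCBs
    have hCan : MeasureTheory.AnalyticSet C := hP C hCBs
    have hCunc : ¬C.Countable := fun h => hA₁unc (h.mono hA₁C)
    letI : MetricSpace HilbertCube := TopologicalSpace.metrizableSpaceMetric HilbertCube
    obtain ⟨B, hBC, hBcantor⟩ := analytic_contains_cantor hCan hCunc
    obtain ⟨h, hhAB⟩ := hA.2 B hBcantor
    have hhA : h '' A ∈ I := hI.2.1 C hCI _ (hhAB.trans hBC)
    rw [← hinv h.symm]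
    refine ⟨h '' A, hhA, ?_⟩
    simp [Set.image_image]
  refine ⟨hmain, ?_⟩
  rintro ⟨hI', hσ⟩ A ⟨S, hSmem, hsub⟩
  exact hI'.2.1 _ (hσ S fun n => hmain (hSmem n)) A hsub
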